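/- Let A be a proper K-subalgebra of K[x] of finite codimension and let α ∈ K. Then α ∈ Sp(A) if and only if for every pair of monic polynomials p, q ∈ A whose degrees are relatively prime, α belongs to Sp(B), where B is the K-subalgebra of K[x] generated by p and q. -/

import Mathlib

open Polynomial

/-- Degrees of monic elements of a finite-codimension subalgebra are cofinite. -/
lemma exists_monic_of_large {K : Type*} [Field K] (A : Subalgebra K (Polynomial K))
    (hfin : FiniteDimensional K (Polynomial K ⧸ Subalgebra.toSubmodule A)) :
    ∃ n0 : ℕ, ∀ n ≥ n0, ∃ f ∈ A, f.Monic ∧ f.natDegree = n := by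
  classical
  set T : Set ℕ := {n | ¬ ∃ f ∈ A, f.Monic ∧ f.natDegree = n} with hT
  have hli : LinearIndependent K
      (fun n : T => Submodule.Quotient.mk (p := Subalgebra.toSubmodule A) (X ^ (n : ℕ))) := by
    rw [linearIndependent_iff']
    intro s g hsum i his
    by_contra hgi
    set P : Polynomial K := ∑ j ∈ s, g j • (X : Polynomial K) ^ (j : ℕ) with hP
    have hmem : P ∈ Subalgebra.toSubmodule A := by
      rw [← Submodule.Quotient.mk_eq_zero, ← hsum, hP]
      simp [← Submodule.mkQ_apply, map_sum, map_smul]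
    have hcoeff : ∀ j : T, j ∈ s → P.coeff (j : ℕ) = g j := by
      intro j hjs
      rw [hP, Polynomial.finset_sum_coeff]
      rw [Finset.sum_eq_single j]
      · simp
      · intro b _ hbj
        have hne : (j : ℕ) ≠ (b : ℕ) := fun h => hbj (Subtype.ext h.symm)
        simp [Polynomial.coeff_smul, Polynomial.coeff_X_pow, hne]
      · intro h; exact absurd hjs h
    have hPne : P ≠ 0 := fun h0 => hgi (by rw [← hcoeff i his, h0, Polynomial.coeff_zero])
    have hlc : P.coeff P.natDegree ≠ 0 := fun h => hPne (Polynomial.leadingCoeff_eq_zero.mp h)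
    have hdegT : P.natDegree ∈ T := by
      have hex : ∃ j ∈ s, (j : ℕ) = P.natDegree := by
        by_contra hno
        push_neg at hno
        apply hlc
        rw [hP, Polynomial.finset_sum_coeff]
        apply Finset.sum_eq_zero
        intro b hb
        have hne : P.natDegree ≠ (b : ℕ) := fun h => hno b hb h.symm
        simp [Polynomial.coeff_smul, Polynomial.coeff_X_pow, hne, ← hP]
      obtain ⟨j, _, hj⟩ := hex
      rw [← hj]; exact j.2
    exact hdegT ⟨P * C P.leadingCoeff⁻¹, A.mul_mem hmem (A.algebraMap_mem _),
      monic_mul_leadingCoeff_inv hPne, natDegree_mul_leadingCoeff_inv P hPne⟩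
  have hfinT : T.Finite := by
    have : Finite T := hli.finite
    exact Set.toFinite T
  obtain ⟨n0, hn0⟩ := hfinT.bddAbove
  refine ⟨n0 + 1, fun n hn => ?_⟩
  by_contra hnot
  have : n ≤ n0 := hn0 hnot
  omega

lemma exists_separating {K : Type*} [Field K] [Infinite K]
    (A : Subalgebra K (Polynomial K)) (α : K) (F : Finset K)
    (hF : ∀ β ∈ F, ∃ f ∈ A, f.eval α ≠ f.eval β) :
    ∃ h ∈ A, ∀ β ∈ F, h.eval β ≠ h.eval α := by
  classical
  induction F using Finset.induction with
  | empty => exact ⟨0, A.zero_mem, by simp⟩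
  | @insert β₀ F hβ₀F ih =>
    obtain ⟨h, hhA, hh⟩ := ih fun β hβ => hF β (Finset.mem_insert_of_mem hβ)
    obtain ⟨f₀, hf₀A, hf₀⟩ := hF β₀ (Finset.mem_insert_self _ _)
    set bad : Finset K := insert ((h.eval α - h.eval β₀) / (f₀.eval β₀ - f₀.eval α))
      (F.image fun β => (h.eval α - h.eval β) / (f₀.eval β - f₀.eval α)) with hbad
    obtain ⟨t, ht⟩ := Infinite.exists_notMem_finset bad
    refine ⟨h + C t * f₀, A.add_mem hhA (A.mul_mem (A.algebraMap_mem t) hf₀A), ?_⟩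
    intro β hβ heq
    simp only [eval_add, eval_mul, eval_C] at heq
    rcases Finset.mem_insert.mp hβ with rfl | hβF
    · have hne : f₀.eval β - f₀.eval α ≠ 0 := sub_ne_zero.mpr (fun h' => hf₀ h'.symm)
      apply ht
      rw [hbad, Finset.mem_insert]
      left
      field_simp
      linear_combination heq
    · by_cases hdn : f₀.eval β - f₀.eval α = 0
      · have : f₀.eval β = f₀.eval α := sub_eq_zero.mp hdn
        apply hh β hβF
        have h2 : t * f₀.eval β = t * f₀.eval α := by rw [this]
        linear_combination heq - h2
      · apply ht
        rw [hbad, Finset.mem_insert]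
        right
        refine Finset.mem_image.mpr ⟨β, hβF, ?_⟩
        field_simp
        linear_combination -heq

/-- The spectrum of a subalgebra `A` of `K[x]`. -/
def subalgebraSpectrum {K : Type*} [Field K] (A : Subalgebra K (Polynomial K)) : Set K :=
  {α | (∀ f ∈ A, (Polynomial.derivative f).eval α = 0) ∨
    ∃ β : K, β ≠ α ∧ ∀ f ∈ A, f.eval α = f.eval β}

theorem mem_spectrum_iff_forall_pairs
    {K : Type*} [Field K] [IsAlgClosed K] [CharZero K]
    (A : Subalgebra K (Polynomial K)) (hproper : A ≠ ⊤)
    (hfin : FiniteDimensional K (Polynomial K ⧸ Subalgebra.toSubmodule A))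
    (α : K) :
    α ∈ subalgebraSpectrum A ↔
      ∀ p q : Polynomial K, p ∈ A → q ∈ A → p.Monic → q.Monic →
        Nat.Coprime p.natDegree q.natDegree →
        α ∈ subalgebraSpectrum (Algebra.adjoin K {p, q}) := by
  classical
  constructor
  · intro hα p q hpA hqA _ _ _
    have hle : Algebra.adjoin K {p, q} ≤ A := by
      apply Algebra.adjoin_le
      rintro r (rfl | rfl) <;> assumption
    rcases hα with h | ⟨β, hβ, h⟩
    · exact Or.inl fun f hf => h f (hle hf)
    · exact Or.inr ⟨β, hβ, fun f hf => h f (hle hf)⟩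
  · intro H
    by_contra hα
    simp only [subalgebraSpectrum, Set.mem_setOf_eq] at hα
    push_neg at hα
    obtain ⟨⟨u, huA, hu'⟩, hsep⟩ := hα
    obtain ⟨n0, hn0⟩ := exists_monic_of_large A hfin
    set N := max n0 (u.natDegree + 1) with hN
    obtain ⟨e, heA, hemonic, hedeg⟩ := hn0 N (le_max_left _ _)
    have hNu : u.natDegree < N := lt_of_lt_of_le (Nat.lt_succ_self _) (le_max_right _ _)
    have hN1 : 1 ≤ N := le_trans (Nat.succ_le_succ (Nat.zero_le _)) (le_max_right _ _)
    set c : K := (1 - (derivative e).eval α) / (derivative u).eval α with hc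
    set p : Polynomial K := e + C c * u with hp
    have hpA : p ∈ A := A.add_mem heA (A.mul_mem (A.algebraMap_mem c) huA)
    have hdegcu : (C c * u).degree < e.degree := by
      have h1 : (C c * u).degree ≤ u.degree :=
        le_trans (degree_mul_le _ _)
          (by simpa using add_le_add (degree_C_le (a := c)) (le_refl u.degree))
      refine lt_of_le_of_lt (le_trans h1 degree_le_natDegree) ?_
      rw [degree_eq_natDegree hemonic.ne_zero, hedeg]
      exact_mod_cast hNu
    have hpmonic : p.Monic := hemonic.add_of_left hdegcu
    have hpdeg : p.natDegree = N := by
      rw [hp, natDegree_add_eq_left_of_degree_lt hdegcu, hedeg]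
    have hp' : (derivative p).eval α = 1 := by
      rw [hp]
      simp only [derivative_add, derivative_mul, derivative_C, zero_mul, zero_add,
        eval_add, eval_mul, eval_C]
      rw [hc]
      field_simp
      ring
    have hpCne : p - C (p.eval α) ≠ 0 := by
      intro h0
      have h1 : p.natDegree = 0 := by
        rw [← natDegree_sub_C (a := p.eval α), h0, natDegree_zero]
      omega
    set R : Finset K := (p - C (p.eval α)).roots.toFinset with hR
    have hmemR : ∀ β : K, p.eval β = p.eval α → β ∈ R := by
      intro β hβ
      rw [hR, Multiset.mem_toFinset, mem_roots hpCne]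
      simp [IsRoot, hβ]
    obtain ⟨h, hhA, hhsep⟩ := exists_separating A α (R.erase α)
      (fun β hβ => hsep β (Finset.ne_of_mem_erase hβ))
    set k := n0 + h.natDegree + 1 with hk
    set M := k * N + 1 with hM
    have hkN : k ≤ k * N := Nat.le_mul_of_pos_right k (by omega)
    have hMn0 : n0 ≤ M := by omega
    have hMh : h.natDegree < M := by omega
    have hcop : Nat.Coprime N M := by
      rw [hM, Nat.add_comm]
      exact (Nat.coprime_add_mul_right_right N 1 k).mpr (Nat.coprime_one_right N)
    obtain ⟨e2, he2A, he2monic, he2deg⟩ := hn0 M hMn0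
    set bad : Finset K := R.image (fun β => (e2.eval α - e2.eval β) / (h.eval β - h.eval α))
      with hbad
    obtain ⟨t, ht⟩ := Infinite.exists_notMem_finset bad
    set q : Polynomial K := e2 + C t * h with hq
    have hqA : q ∈ A := A.add_mem he2A (A.mul_mem (A.algebraMap_mem t) hhA)
    have hdegth : (C t * h).degree < e2.degree := by
      have h1 : (C t * h).degree ≤ h.degree :=
        le_trans (degree_mul_le _ _)
          (by simpa using add_le_add (degree_C_le (a := t)) (le_refl h.degree))
      refine lt_of_le_of_lt (le_trans h1 degree_le_natDegree) ?_
      rw [degree_eq_natDegree he2monic.ne_zero, he2deg]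
      exact_mod_cast hMh
    have hqmonic : q.Monic := he2monic.add_of_left hdegth
    have hqdeg : q.natDegree = M := by
      rw [hq, natDegree_add_eq_left_of_degree_lt hdegth, he2deg]
    have hqsep : ∀ β ∈ R.erase α, q.eval β ≠ q.eval α := by
      intro β hβ heq
      apply ht
      rw [hbad]
      refine Finset.mem_image.mpr ⟨β, Finset.mem_of_mem_erase hβ, ?_⟩
      have hne : h.eval β - h.eval α ≠ 0 := sub_ne_zero.mpr (hhsep β hβ)
      rw [hq] at heq
      simp only [eval_add, eval_mul, eval_C] at heq
      field_simp
      linear_combination -heq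
    have hBcop : Nat.Coprime p.natDegree q.natDegree := by rw [hpdeg, hqdeg]; exact hcop
    have hpB : p ∈ Algebra.adjoin K ({p, q} : Set (Polynomial K)) :=
      Algebra.subset_adjoin (Set.mem_insert _ _)
    have hqB : q ∈ Algebra.adjoin K ({p, q} : Set (Polynomial K)) :=
      Algebra.subset_adjoin (Set.mem_insert_of_mem _ rfl)
    rcases H p q hpA hqA hpmonic hqmonic hBcop with hd | ⟨β, hβα, hall⟩
    · have h1 := hd p hpB
      rw [hp'] at h1
      exact one_ne_zero h1
    · have hpβ : p.eval α = p.eval β := hall p hpB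
      have hβR : β ∈ R.erase α := Finset.mem_erase.mpr ⟨hβα, hmemR β hpβ.symm⟩
      exact hqsep β hβR (hall q hqB).symm
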